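/- arXiv:1210.5012 — 2 statements merged into one kernel-verified Lean document; each statement's English description precedes it below -/
import Mathlib

section
/- (Truthfulness of MultiMUE double auction, buyer side) Let Q*(B, A) be the maximum of Σ_{(i,j) ∈ M} max_{0 ≤ n ≤ N_j} (b_{ij}(n) - a_j(n)) over all partial matchings M between the MUE set I and femtocell set J, with optimal matching σ and optimal quantities n*_{iσ(i)}. Suppose winning MUE i with true valuation vectors v_{ij} pays p_i = b_{i,σ(i)}(n*_{i,σ(i)}) - (Q* - Q*_{-i}), where Q*_{-i} is the optimum with MUE i removed, and obtains utility u_i = v_{i,σ(i)}(n*_{i,σ(i)}) - p_i. Then with all other bids and asks fixed, MUE i's utility from bidding truthfully (b_{ij} = v_{ij} for all j) is at least its utility from any false bid vectors b'_{ij}. -/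
/-- A one-to-one partial matching between MUEs and femtocells: distinct pairs
share no MUE and no femtocell. -/
def IsMatching {I J : Type*} (M : Finset (I × J)) : Prop :=
  ∀ p ∈ M, ∀ q ∈ M, p ≠ q → p.1 ≠ q.1 ∧ p.2 ≠ q.2

/-- Total system efficiency Σ_{(i,j)∈M} max_{0 ≤ n ≤ N_j} (b_{ij}(n) - a_j(n))
of a matching M, for bid profile B and ask profile a. -/
noncomputable def mval {I J : Type*} (B : I → J → ℕ → ℝ) (a : J → ℕ → ℝ)
    (N : J → ℕ) (M : Finset (I × J)) : ℝ :=
  ∑ p ∈ M, (Finset.range (N p.2 + 1)).sup'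
    (Finset.nonempty_range_iff.mpr (Nat.succ_ne_zero _))
    (fun n => B p.1 p.2 n - a p.2 n)

/-- If a matching avoids MUE `i`, updating `i`'s bids does not change its value. -/
lemma mval_update_eq {I J : Type*} [DecidableEq I]
    (B : I → J → ℕ → ℝ) (a : J → ℕ → ℝ) (N : J → ℕ) (i : I) (f : J → ℕ → ℝ)
    (M : Finset (I × J)) (hM : ∀ p ∈ M, p.1 ≠ i) :
    mval (Function.update B i f) a N M = mval B a N M := by
  unfold mval
  refine Finset.sum_congr rfl fun p hp => ?_
  rw [Function.update_of_ne (hM p hp)]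

/-- Splitting off the pair containing MUE `i` from a matching. -/
lemma mval_split {I J : Type*} [DecidableEq I] [DecidableEq J]
    (B : I → J → ℕ → ℝ) (a : J → ℕ → ℝ) (N : J → ℕ) (i : I) (f : J → ℕ → ℝ)
    (M : Finset (I × J)) (hM : IsMatching M) (j : J) (hij : (i, j) ∈ M) :
    mval (Function.update B i f) a N M =
      (Finset.range (N j + 1)).sup'
        (Finset.nonempty_range_iff.mpr (Nat.succ_ne_zero _))
        (fun n => f j n - a j n)
      + mval B a N (M.erase (i, j)) := by
  unfold mval
  rw [← Finset.add_sum_erase _ _ hij]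
  congr 1
  · simp [Function.update_self]
  · refine Finset.sum_congr rfl fun p hp => ?_
    have hp' := Finset.mem_of_mem_erase hp
    have hne : p ≠ (i, j) := Finset.ne_of_mem_erase hp
    have := (hM p hp' (i, j) hij hne).1
    rw [Function.update_of_ne this]

/-- Truthfulness of the MultiMUE double auction, buyer side:
with all other bids and asks fixed, MUE i's utility from bidding its true
valuations v is at least its utility from any false bid vectors b'. -/
theorem stmt5 {I J : Type*} [DecidableEq I]
    (B : I → J → ℕ → ℝ) (a : J → ℕ → ℝ) (N : J → ℕ) (i : I)
    (v b' : J → ℕ → ℝ)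
    (hv0 : ∀ j, v j 0 = 0) (hb'0 : ∀ j, b' j 0 = 0) (ha0 : ∀ j, a j 0 = 0)
    (Mv Mb Mmv Mmb : Finset (I × J)) (jv jb : J) (nv nb : ℕ)
    -- optimal matching under truthful bids of i
    (hMv : IsMatching Mv)
    (hMvopt : ∀ M, IsMatching M →
      mval (Function.update B i v) a N M ≤ mval (Function.update B i v) a N Mv)
    -- optimal matching under false bids b' of i
    (hMb : IsMatching Mb)
    (hMbopt : ∀ M, IsMatching M →
      mval (Function.update B i b') a N M ≤ mval (Function.update B i b') a N Mb)
    -- MUE i wins in both cases, with partner σ(i) and optimal quantity n*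
    (hwinv : (i, jv) ∈ Mv) (hwinb : (i, jb) ∈ Mb)
    (hnv : nv ≤ N jv) (hnb : nb ≤ N jb)
    (hnvmax : v jv nv - a jv nv =
      (Finset.range (N jv + 1)).sup'
        (Finset.nonempty_range_iff.mpr (Nat.succ_ne_zero _))
        (fun n => v jv n - a jv n))
    (hnbmax : b' jb nb - a jb nb =
      (Finset.range (N jb + 1)).sup'
        (Finset.nonempty_range_iff.mpr (Nat.succ_ne_zero _))
        (fun n => b' jb n - a jb n))
    -- optimum with MUE i removed, truthful profile
    (hMmv : IsMatching Mmv) (hMmvni : ∀ p ∈ Mmv, p.1 ≠ i)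
    (hMmvopt : ∀ M, IsMatching M → (∀ p ∈ M, p.1 ≠ i) →
      mval (Function.update B i v) a N M ≤ mval (Function.update B i v) a N Mmv)
    -- optimum with MUE i removed, false profile
    (hMmb : IsMatching Mmb) (hMmbni : ∀ p ∈ Mmb, p.1 ≠ i)
    (hMmbopt : ∀ M, IsMatching M → (∀ p ∈ M, p.1 ≠ i) →
      mval (Function.update B i b') a N M ≤ mval (Function.update B i b') a N Mmb) :
    -- utility from false bids  ≤  utility from truthful bids
    v jb nb - (b' jb nb -
        (mval (Function.update B i b') a N Mb - mval (Function.update B i b') a N Mmb))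
      ≤ v jv nv - (v jv nv -
        (mval (Function.update B i v) a N Mv - mval (Function.update B i v) a N Mmv)) := by
  classical
  -- the two "without i" optima coincide
  have hmm : mval (Function.update B i v) a N Mmv
      = mval (Function.update B i b') a N Mmb := by
    have h1 := hMmvopt Mmb hMmb hMmbni
    have h2 := hMmbopt Mmv hMmv hMmvni
    have e1 := mval_update_eq B a N i v Mmv hMmvni
    have e2 := mval_update_eq B a N i b' Mmb hMmbni
    have e3 := mval_update_eq B a N i v Mmb hMmbni
    have e4 := mval_update_eq B a N i b' Mmv hMmvni
    linarith
  -- key inequality: truthful optimum dominates value of Mb under truthful profile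
  have hkey : mval (Function.update B i v) a N Mb
      ≤ mval (Function.update B i v) a N Mv := hMvopt Mb hMb
  have hsplitv : mval (Function.update B i v) a N Mb =
      (Finset.range (N jb + 1)).sup'
        (Finset.nonempty_range_iff.mpr (Nat.succ_ne_zero _))
        (fun n => v jb n - a jb n)
      + mval B a N (Mb.erase (i, jb)) := mval_split B a N i v Mb hMb jb hwinb
  have hsplitb : mval (Function.update B i b') a N Mb =
      (Finset.range (N jb + 1)).sup'
        (Finset.nonempty_range_iff.mpr (Nat.succ_ne_zero _))
        (fun n => b' jb n - a jb n)
      + mval B a N (Mb.erase (i, jb)) := mval_split B a N i b' Mb hMb jb hwinb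
  have hle : v jb nb - a jb nb ≤
      (Finset.range (N jb + 1)).sup'
        (Finset.nonempty_range_iff.mpr (Nat.succ_ne_zero _))
        (fun n => v jb n - a jb n) :=
    Finset.le_sup' (fun n => v jb n - a jb n) (Finset.mem_range.mpr (Nat.lt_succ_of_le hnb))
  linarith [hnbmax]
end

section
/- The MultiMUE winner-determination problem — maximize Σ_{i,j} (b_{ij}(n_{ij}) - a_j(n_{ij})) over nonnegative integers n_{ij} ≤ N_j subject to the constraints Σ_i n_{ij} = max_i n_{ij} for every j and Σ_j n_{ij} = max_j n_{ij} for every i — has the same optimal value as the maximum-weight partial matching problem on the complete bipartite graph between I and J with edge weights w_{ij} = max(0, max_{0 ≤ n ≤ N_j} (b_{ij}(n) - a_j(n))), where all bid/ask vectors satisfy b_{ij}(0) = a_j(0) = 0. -/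
/-- If at most one value of `f` is nonzero, the sum equals the sup. -/
lemma sum_eq_sup_of_subsingleton {ι : Type*} [Fintype ι] (f : ι → ℕ)
    (h : ∀ i i', f i ≠ 0 → f i' ≠ 0 → i = i') :
    ∑ i, f i = Finset.univ.sup f := by
  by_cases hz : ∀ i, f i = 0
  · have h0 : Finset.univ.sup f = 0 :=
      Nat.le_zero.mp (Finset.sup_le fun i _ => (hz i).le)
    simp [hz, h0]
  · push_neg at hz
    obtain ⟨i0, hi0⟩ := hz
    have hsum : ∑ i, f i = f i0 :=
      Finset.sum_eq_single i0 (fun i _ hne => by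
        by_contra hfi; exact hne (h i i0 hfi hi0)) (by simp)
    have hsup : Finset.univ.sup f = f i0 := by
      apply le_antisymm
      · exact Finset.sup_le fun i _ => by
          by_cases hfi : f i = 0
          · simp [hfi]
          · rw [h i i0 hfi hi0]
      · exact Finset.le_sup (Finset.mem_univ i0)
    rw [hsum, hsup]

/-- If the sum equals the sup, at most one value of `f` is nonzero. -/
lemma subsingleton_of_sum_eq_sup {ι : Type*} [Fintype ι] (f : ι → ℕ)
    (h : ∑ i, f i = Finset.univ.sup f) :
    ∀ i i', f i ≠ 0 → f i' ≠ 0 → i = i' := by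
  classical
  intro i i' hi hi'
  obtain ⟨i0, -, hi0⟩ := Finset.exists_mem_eq_sup Finset.univ ⟨i, Finset.mem_univ i⟩ f
  have key : ∀ k, k ≠ i0 → f k = 0 := by
    intro k hk
    have hle : f i0 + f k ≤ ∑ x, f x := by
      have := Finset.sum_le_sum_of_subset
        (Finset.subset_univ ({i0, k} : Finset ι)) (f := f)
      rwa [Finset.sum_pair (Ne.symm hk)] at this
    omega
  by_contra hne
  rcases eq_or_ne i i0 with h1 | h1
  · exact hi' (key i' (by rw [← h1]; exact Ne.symm hne))
  · exact hi (key i h1)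

/-- the MultiMUE winner-determination integer program (maximize
Σ_{i,j} (b_{ij}(n_{ij}) - a_j(n_{ij})) subject to n_{ij} ≤ N_j,
Σ_i n_{ij} = max_i n_{ij} for every j, and Σ_j n_{ij} = max_j n_{ij} for every
i) has the same optimal value as maximum-weight partial matching on the
complete bipartite graph with weights
w_{ij} = max(0, max_{0 ≤ n ≤ N_j} (b_{ij}(n) - a_j(n))). -/
theorem stmt7 {I J : Type*} [Fintype I] [Fintype J]
    (B : I → J → ℕ → ℝ) (a : J → ℕ → ℝ) (N : J → ℕ)
    (hB0 : ∀ i j, B i j 0 = 0) (ha0 : ∀ j, a j 0 = 0) :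
    ∃ Q : ℝ,
      IsGreatest {x : ℝ | ∃ n : I → J → ℕ,
        ((∀ i j, n i j ≤ N j) ∧
         (∀ j, ∑ i, n i j = Finset.univ.sup (fun i => n i j)) ∧
         (∀ i, ∑ j, n i j = Finset.univ.sup (fun j => n i j))) ∧
        x = ∑ i, ∑ j, (B i j (n i j) - a j (n i j))} Q ∧
      IsGreatest {x : ℝ | ∃ M : Finset (I × J), IsMatching M ∧
        x = ∑ p ∈ M, max 0 ((Finset.range (N p.2 + 1)).sup'
          (Finset.nonempty_range_iff.mpr (Nat.succ_ne_zero _))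
          (fun n => B p.1 p.2 n - a p.2 n))} Q := by
  classical
  -- the weight of an edge
  set w : I × J → ℝ := fun p => (Finset.range (N p.2 + 1)).sup'
      (Finset.nonempty_range_iff.mpr (Nat.succ_ne_zero _))
      (fun n => B p.1 p.2 n - a p.2 n) with hw
  have hw0 : ∀ p : I × J, 0 ≤ w p := fun p => by
    have h0 : B p.1 p.2 0 - a p.2 0 ≤ w p :=
      Finset.le_sup' (fun n => B p.1 p.2 n - a p.2 n)
        (Finset.mem_range.mpr (Nat.succ_pos _))
    simpa [hB0, ha0] using h0
  have hmaxw : ∀ p : I × J,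
      max 0 ((Finset.range (N p.2 + 1)).sup'
        (Finset.nonempty_range_iff.mpr (Nat.succ_ne_zero _))
        (fun n => B p.1 p.2 n - a p.2 n)) = w p := fun p => max_eq_right (hw0 p)
  -- choose a maximizer n for each edge
  have hsel : ∀ p : I × J, ∃ m, m ∈ Finset.range (N p.2 + 1) ∧
      w p = B p.1 p.2 m - a p.2 m := fun p =>
    Finset.exists_mem_eq_sup' _ _
  choose sel hsel1 hsel2 using hsel
  -- the finite set of matchings
  set F : Finset (Finset (I × J)) :=
    Finset.univ.filter (fun M => IsMatching M) with hF
  have hFne : F.Nonempty :=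
    ⟨∅, by simp [hF, IsMatching]⟩
  set Q : ℝ := F.sup' hFne (fun M => ∑ p ∈ M, w p) with hQ
  obtain ⟨M0, hM0F, hM0⟩ := Finset.exists_mem_eq_sup' hFne (fun M => ∑ p ∈ M, w p)
  have hM0match : IsMatching M0 := (Finset.mem_filter.mp hM0F).2
  -- upper bound for matchings
  have hub2 : ∀ M : Finset (I × J), IsMatching M → ∑ p ∈ M, w p ≤ Q := by
    intro M hM
    rw [hQ]
    exact Finset.le_sup' (fun M => ∑ p ∈ M, w p)
      (Finset.mem_filter.mpr ⟨Finset.mem_univ _, hM⟩)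
  refine ⟨Q, ⟨?_, ?_⟩, ⟨?_, ?_⟩⟩
  · -- Q attained by the IP
    refine ⟨fun i j => if (i, j) ∈ M0 then sel (i, j) else 0, ⟨?_, ?_, ?_⟩, ?_⟩
    · intro i j
      by_cases h : (i, j) ∈ M0
      · simp only [h, if_true]
        exact Nat.lt_succ_iff.mp (Finset.mem_range.mp (hsel1 (i, j)))
      · simp [h]
    · intro j
      apply sum_eq_sup_of_subsingleton
      intro i i' hi hi'
      have h1 : (i, j) ∈ M0 := by by_contra h; simp [h] at hi
      have h2 : (i', j) ∈ M0 := by by_contra h; simp [h] at hi'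
      by_contra hne
      exact (hM0match _ h1 _ h2 (by simp [hne])).2 rfl
    · intro i
      apply sum_eq_sup_of_subsingleton
      intro j j' hj hj'
      have h1 : (i, j) ∈ M0 := by by_contra h; simp [h] at hj
      have h2 : (i, j') ∈ M0 := by by_contra h; simp [h] at hj'
      by_contra hne
      exact (hM0match _ h1 _ h2 (by simp [hne])).1 rfl
    · rw [hQ, hM0, ← Finset.sum_product']
      refine Eq.trans ?_ (Finset.sum_subset (Finset.subset_univ M0) ?_)
      · refine Finset.sum_congr rfl fun p hp => ?_
        simp only [Prod.mk.eta, hp, if_true]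
        exact hsel2 p
      · intro p _ hp
        simp only [Prod.mk.eta, hp, if_false]
        simp [hB0, ha0]
  · -- Q is an upper bound for the IP
    rintro x ⟨n, ⟨hle, hcol, hrow⟩, rfl⟩
    set M : Finset (I × J) := Finset.univ.filter (fun p => n p.1 p.2 ≠ 0) with hM
    have hMmatch : IsMatching M := by
      intro p hp q hq hpq
      have hpn : n p.1 p.2 ≠ 0 := (Finset.mem_filter.mp hp).2
      have hqn : n q.1 q.2 ≠ 0 := (Finset.mem_filter.mp hq).2
      constructor
      · intro h1
        have h2 : p.2 = q.2 := by
          exact subsingleton_of_sum_eq_sup _ (hrow p.1) p.2 q.2 hpn (h1 ▸ hqn)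
        exact hpq (Prod.ext h1 h2)
      · intro h2
        have h1 : p.1 = q.1 := by
          exact subsingleton_of_sum_eq_sup _ (hcol p.2) p.1 q.1 hpn (h2 ▸ hqn)
        exact hpq (Prod.ext h1 h2)
    have hval : ∑ i, ∑ j, (B i j (n i j) - a j (n i j))
        = ∑ p ∈ M, (B p.1 p.2 (n p.1 p.2) - a p.2 (n p.1 p.2)) := by
      rw [← Finset.sum_product']
      refine (Finset.sum_subset (Finset.filter_subset _ _) ?_).symm
      intro p _ hp
      have : n p.1 p.2 = 0 := by
        by_contra h
        exact hp (Finset.mem_filter.mpr ⟨Finset.mem_univ _, h⟩)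
      simp [this, hB0, ha0]
    rw [hval]
    refine le_trans (Finset.sum_le_sum ?_) (hub2 M hMmatch)
    intro p _
    exact Finset.le_sup' (fun m => B p.1 p.2 m - a p.2 m)
      (Finset.mem_range.mpr (Nat.lt_succ_of_le (hle p.1 p.2)))
  · -- Q attained by a matching
    refine ⟨M0, hM0match, ?_⟩
    rw [hQ, hM0]
    exact (Finset.sum_congr rfl fun p _ => (hmaxw p).symm)
  · -- Q is an upper bound for matchings
    rintro x ⟨M, hMm, rfl⟩
    calc ∑ p ∈ M, max 0 ((Finset.range (N p.2 + 1)).sup' _ _)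
        = ∑ p ∈ M, w p := Finset.sum_congr rfl fun p _ => hmaxw p
      _ ≤ Q := hub2 M hMm
end
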